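/- Let L be the free Lie algebra over ℚ on generators x₁, …, x_n. The multilinear component of degree n — the ℚ-subspace spanned by all Lie monomials in which each generator x_i appears exactly once — has dimension (n−1)!, with basis the left-normed brackets [x_{σ(1)}, [x_{σ(2)}, [⋯, [x_{σ(n−1)}, x_n]⋯]]] for σ ranging over permutations of {1, …, n−1}. -/

import Mathlib

/-- `IsLieMon v s` says that `v` is a Lie monomial (an iterated bracket of generators) in the
free Lie algebra, whose multiset of occurring generators (with multiplicity) is `s`. -/
inductive IsLieMon {n : ℕ} : FreeLieAlgebra ℚ (Fin n) → Multiset (Fin n) → Prop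
  | of (i : Fin n) : IsLieMon (FreeLieAlgebra.of ℚ i) {i}
  | bracket {x y : FreeLieAlgebra ℚ (Fin n)} {s t : Multiset (Fin n)} :
      IsLieMon x s → IsLieMon y t → IsLieMon ⁅x, y⁆ (s + t)

/-- The multilinear component of degree `n`: the `ℚ`-subspace of the free Lie algebra on `n`
generators spanned by the Lie monomials in which every generator appears exactly once. -/
noncomputable def MultilinearPart (n : ℕ) : Submodule ℚ (FreeLieAlgebra ℚ (Fin n)) :=
  Submodule.span ℚ {v | IsLieMon v (Finset.univ.val : Multiset (Fin n))}

/-- The left-normed bracket `[x_{σ(0)}, [x_{σ(1)}, [⋯, [x_{σ(n-1)}, x_n]⋯]]]` in the free Lie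
algebra on generators `x_0, …, x_n`, for a permutation `σ` of the first `n` generators. -/
noncomputable def leftNormed (n : ℕ) (σ : Equiv.Perm (Fin n)) : FreeLieAlgebra ℚ (Fin (n + 1)) :=
  (List.ofFn fun i : Fin n => Fin.castSucc (σ i)).foldr
    (fun i acc => ⁅FreeLieAlgebra.of ℚ i, acc⁆) (FreeLieAlgebra.of ℚ (Fin.last n))

noncomputable section Aux18

open FreeLieAlgebra

variable {n : ℕ}

attribute [local instance] LieRing.ofAssociativeRing

/-- Iterated left-normed bracket ending in `x_{last}`. -/
def T18 (n : ℕ) (l : List (Fin (n + 1))) : FreeLieAlgebra ℚ (Fin (n + 1)) :=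
  l.foldr (fun i acc => ⁅FreeLieAlgebra.of ℚ i, acc⁆) (FreeLieAlgebra.of ℚ (Fin.last n))

/-- Embedding of the free Lie algebra into the monoid algebra of the free monoid. -/
def rho18 (n : ℕ) : FreeLieAlgebra ℚ (Fin (n + 1)) →ₗ⁅ℚ⁆ MonoidAlgebra ℚ (FreeMonoid (Fin (n + 1))) :=
  FreeLieAlgebra.lift ℚ (fun i => MonoidAlgebra.single (FreeMonoid.of i) 1)

theorem coeff_T18 (l : List (Fin (n + 1))) (hl : Fin.last n ∉ l) (w : List (Fin (n + 1))) :
    (rho18 n (T18 n l)).coeff (FreeMonoid.ofList (w ++ [Fin.last n])) = if w = l then 1 else 0 := by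
  have h0 : FreeMonoid.of (Fin.last n) = FreeMonoid.ofList ([] ++ [Fin.last n]) := rfl
  induction l generalizing w with
  | nil =>
    classical
    simp only [T18, List.foldr_nil, rho18]
    rw [FreeLieAlgebra.lift_of_apply, MonoidAlgebra.coeff_single, Finsupp.single_apply]
    by_cases h : w = []
    · subst h
      rw [if_pos h0, if_pos rfl]
    · rw [if_neg, if_neg h]
      intro hc
      apply h
      have h2 := congrArg FreeMonoid.toList hc
      simp only [FreeMonoid.toList_ofList, h0, FreeMonoid.toList_ofList] at h2
      have h3 := congrArg List.length h2
      simp at h3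
      exact h3
  | cons a l ih =>
    have ha : a ≠ Fin.last n := fun h => hl (h ▸ List.mem_cons_self (a := a) (l := l))
    have hl' : Fin.last n ∉ l := fun h => hl (List.mem_cons_of_mem a h)
    have : T18 n (a :: l) = ⁅FreeLieAlgebra.of ℚ a, T18 n l⁆ := rfl
    rw [this, LieHom.map_lie, Ring.lie_def, MonoidAlgebra.coeff_sub, Finsupp.sub_apply]
    have hofa : rho18 n (FreeLieAlgebra.of ℚ a) = MonoidAlgebra.single (FreeMonoid.of a) 1 :=
      FreeLieAlgebra.lift_of_apply _ a
    rw [hofa]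
    -- second term vanishes: words in X * single a end in a ≠ last
    have h2 : ((rho18 n (T18 n l) * MonoidAlgebra.single (FreeMonoid.of a) 1 :
        MonoidAlgebra ℚ (FreeMonoid (Fin (n + 1))))).coeff
        (FreeMonoid.ofList (w ++ [Fin.last n])) = 0 := by
      apply MonoidAlgebra.mul_single_apply_of_not_exists_mul
      rintro ⟨d, hd⟩
      have := congrArg FreeMonoid.toList hd
      simp only [FreeMonoid.toList_ofList, FreeMonoid.toList_mul, FreeMonoid.toList_of] at this
      have h1 := congrArg List.getLast? this
      simp [List.getLast?_append] at h1
      exact ha h1.symm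
    rw [h2, sub_zero]
    rcases w with _ | ⟨b, w⟩
    · -- empty w: no d with of a * d = [last]
      rw [MonoidAlgebra.single_mul_apply_of_not_exists_mul]
      · simp
      rintro ⟨d, hd⟩
      have := congrArg FreeMonoid.toList hd
      simp only [FreeMonoid.toList_ofList, FreeMonoid.toList_mul, FreeMonoid.toList_of,
        List.nil_append] at this
      rcases List.cons_eq_cons.mp (this) with ⟨h1, -⟩
      exact ha h1.symm
    · by_cases hb : b = a
      · subst hb
        rw [MonoidAlgebra.single_mul_apply_aux
          (FreeMonoid.ofList (w ++ [Fin.last n])) ?_]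
        · rw [one_mul, ih hl' w]
          by_cases hw : w = l
          · subst hw; simp
          · rw [if_neg hw, if_neg (by simpa using hw)]
        · intro u _
          constructor
          · intro h
            have := congrArg FreeMonoid.toList h
            simp only [FreeMonoid.toList_mul, FreeMonoid.toList_of,
              FreeMonoid.toList_ofList, List.cons_append, List.singleton_append] at this
            rcases List.cons_eq_cons.mp this with ⟨-, h2⟩
            exact FreeMonoid.toList.injective (by simpa using h2)
          · rintro rfl; rfl
      · rw [MonoidAlgebra.single_mul_apply_of_not_exists_mul]
        · rw [if_neg (by simp [hb])]
        rintro ⟨d, hd⟩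
        have := congrArg FreeMonoid.toList hd
        simp only [FreeMonoid.toList_ofList, FreeMonoid.toList_mul, FreeMonoid.toList_of,
          List.cons_append, List.singleton_append] at this
        exact hb (List.cons_eq_cons.mp this).1

section More
variable {n : ℕ}

theorem leftNormed_eq_T18 (σ : Equiv.Perm (Fin n)) :
    leftNormed n σ = T18 n (List.ofFn fun i => Fin.castSucc (σ i)) := rfl

theorem last_not_mem_ofFn (σ : Equiv.Perm (Fin n)) :
    Fin.last n ∉ List.ofFn fun i => Fin.castSucc (σ i) := by
  simp only [List.mem_ofFn, Set.mem_range, not_exists]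
  intro i h
  exact (Fin.castSucc_lt_last (σ i)).ne h

theorem ofFn_inj_perm (σ τ : Equiv.Perm (Fin n)) :
    (List.ofFn fun i => Fin.castSucc (τ i)) = (List.ofFn fun i => Fin.castSucc (σ i)) ↔
      τ = σ := by
  rw [List.ofFn_inj]
  constructor
  · intro h
    ext i
    have h2 := congrFun h i
    exact congrArg Fin.val (Fin.castSucc_injective _ h2)
  · rintro rfl; rfl

theorem li18 (n : ℕ) : LinearIndependent ℚ (leftNormed n) := by
  classical
  rw [Fintype.linearIndependent_iff]
  intro g hg τ
  set w := FreeMonoid.ofList ((List.ofFn fun i => Fin.castSucc (τ i)) ++ [Fin.last n]) with hw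
  let F : FreeLieAlgebra ℚ (Fin (n + 1)) →ₗ[ℚ] ℚ :=
    (Finsupp.lapply w).comp ((MonoidAlgebra.coeffLinearEquiv ℚ).toLinearMap.comp (rho18 n).toLinearMap)
  have key := congrArg F hg
  rw [map_sum, map_zero] at key
  simp only [map_smul, smul_eq_mul] at key
  have hF : ∀ x, F x = (rho18 n x).coeff w := fun x => rfl
  simp only [hF] at key
  have hterm : ∀ σ : Equiv.Perm (Fin n),
      (rho18 n (leftNormed n σ)).coeff (FreeMonoid.ofList
        ((List.ofFn fun i => Fin.castSucc (τ i)) ++ [Fin.last n])) =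
      if τ = σ then 1 else 0 := by
    intro σ
    rw [leftNormed_eq_T18, coeff_T18 _ (last_not_mem_ofFn σ)]
    simp_rw [ofFn_inj_perm]
  simp only [hw, hterm] at key
  simp only [mul_ite, mul_one, mul_zero, Finset.sum_ite_eq, Finset.mem_univ, if_pos] at key
  exact key

/-- Span of left-normed monomials whose prefix multiset is `s`. -/
noncomputable def LSpan18 (n : ℕ) (s : Multiset (Fin (n + 1))) :
    Submodule ℚ (FreeLieAlgebra ℚ (Fin (n + 1))) :=
  Submodule.span ℚ {v | ∃ l : List (Fin (n + 1)), (l : Multiset (Fin (n + 1))) = s ∧ v = T18 n l}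

theorem lie_mem_LSpan18 {u : FreeLieAlgebra ℚ (Fin (n + 1))} {s : Multiset (Fin (n + 1))}
    (hu : IsLieMon u s) :
    ∀ t : Multiset (Fin (n + 1)), ∀ m ∈ LSpan18 n t, ⁅u, m⁆ ∈ LSpan18 n (s + t) := by
  induction hu with
  | of i =>
    intro t m hm
    have hle : LSpan18 n t ≤ (LSpan18 n ({i} + t)).comap
        (LieAlgebra.ad ℚ (FreeLieAlgebra ℚ (Fin (n + 1))) (FreeLieAlgebra.of ℚ i)) := by
      rw [LSpan18, Submodule.span_le]
      rintro v ⟨l, hls, rfl⟩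
      apply Submodule.subset_span
      exact ⟨i :: l, by simp [← hls, Multiset.singleton_add], rfl⟩
    simpa using hle hm
  | @bracket x y sx sy hx hy ihx ihy =>
    intro t m hm
    rw [lie_lie]
    apply Submodule.sub_mem
    · have h := ihx _ _ (ihy t m hm)
      rwa [← add_assoc] at h
    · have h := ihy _ _ (ihx t m hm)
      rwa [← add_assoc, add_comm sy sx] at h

theorem mem_LSpan18 {v : FreeLieAlgebra ℚ (Fin (n + 1))} {s : Multiset (Fin (n + 1))}
    (hv : IsLieMon v s) (hc : s.count (Fin.last n) = 1) :
    v ∈ LSpan18 n (s.erase (Fin.last n)) := by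
  induction hv with
  | of i =>
    have hi : i = Fin.last n := by
      by_contra h
      simp only [Multiset.count_singleton] at hc
      rw [if_neg (fun hh => h hh.symm)] at hc
      exact one_ne_zero hc.symm
    subst hi
    apply Submodule.subset_span
    exact ⟨[], by simp, rfl⟩
  | @bracket x y sx sy hx hy ihx ihy =>
    rw [Multiset.count_add] at hc
    rcases Nat.add_eq_one_iff.mp hc with ⟨h1, h2⟩ | ⟨h1, h2⟩
    · -- h1 : count sx = 0, h2 : count sy = 1
      have hxs : Fin.last n ∉ sx := by
        rw [← Multiset.count_eq_zero]; exact h1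
      have hmem : Fin.last n ∈ sy := by
        rw [← Multiset.count_pos, h2]; norm_num
      have h := lie_mem_LSpan18 hx _ _ (ihy h2)
      rwa [Multiset.erase_add_right_pos sx hmem]
    · -- h1 : count sx = 1, h2 : count sy = 0
      have hys : Fin.last n ∉ sy := by
        rw [← Multiset.count_eq_zero]; exact h2
      have hmem : Fin.last n ∈ sx := by
        rw [← Multiset.count_pos, h1]; norm_num
      rw [← lie_skew]
      apply Submodule.neg_mem
      have h := lie_mem_LSpan18 hy _ _ (ihx h1)
      rwa [Multiset.erase_add_left_pos sy hmem, add_comm (sx.erase _) sy]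

theorem isLieMon_T18 (l : List (Fin (n + 1))) :
    IsLieMon (T18 n l) ((l : Multiset (Fin (n + 1))) + {Fin.last n}) := by
  induction l with
  | nil => simpa [T18] using IsLieMon.of (Fin.last n)
  | cons a l ih =>
    have h := IsLieMon.bracket (IsLieMon.of a) ih
    have : ({a} : Multiset (Fin (n + 1))) + ((l : Multiset (Fin (n + 1))) + {Fin.last n}) =
        ((a :: l : List (Fin (n + 1))) : Multiset (Fin (n + 1))) + {Fin.last n} := by
      simp [Multiset.singleton_add, ← add_assoc]
    rwa [this] at h

theorem univ_val_succ :
    (Finset.univ.val : Multiset (Fin (n + 1))) =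
      Fin.last n ::ₘ Multiset.map Fin.castSucc (Finset.univ.val : Multiset (Fin n)) := by
  rw [Fin.univ_castSuccEmb]
  simp only [Finset.cons_val, Finset.map_val]
  rfl

theorem multiset_ofFn (σ : Equiv.Perm (Fin n)) :
    ((List.ofFn fun i => Fin.castSucc (σ i) : List (Fin (n + 1))) :
      Multiset (Fin (n + 1))) = Multiset.map Fin.castSucc (Finset.univ.val : Multiset (Fin n)) := by
  have h1 : (List.ofFn fun i => Fin.castSucc (σ i)) =
      (List.ofFn fun i => σ i).map Fin.castSucc := by
    simp [List.map_ofFn, Function.comp_def]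
  rw [h1, ← Multiset.map_coe]
  congr 1
  have h2 : ((List.ofFn fun i => σ i : List (Fin n)) : Multiset (Fin n)) =
      Multiset.map σ (Finset.univ.val) := by
    rw [List.ofFn_eq_map, ← Multiset.map_coe]
    congr 1
  rw [h2]
  have := Finset.map_univ_equiv σ
  calc Multiset.map (⇑σ) Finset.univ.val = (Finset.univ.map σ.toEmbedding).val := by
        simp [Finset.map_val]
    _ = Finset.univ.val := by rw [Finset.map_univ_equiv]

theorem isLieMon_leftNormed (σ : Equiv.Perm (Fin n)) :
    IsLieMon (leftNormed n σ) (Finset.univ.val : Multiset (Fin (n + 1))) := by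
  have h := isLieMon_T18 (n := n) (List.ofFn fun i => Fin.castSucc (σ i))
  rw [leftNormed_eq_T18]
  have he : Multiset.map Fin.castSucc (Finset.univ.val : Multiset (Fin n)) + {Fin.last n} =
      (Finset.univ.val : Multiset (Fin (n + 1))) := by
    rw [univ_val_succ]
    exact (add_comm _ _).trans (Multiset.singleton_add _ _)
  rwa [multiset_ofFn, he] at h

theorem exists_perm_of_list (l : List (Fin (n + 1)))
    (hl : (l : Multiset (Fin (n + 1))) =
      Multiset.map Fin.castSucc (Finset.univ.val : Multiset (Fin n))) :
    ∃ σ : Equiv.Perm (Fin n), l = List.ofFn fun i => Fin.castSucc (σ i) := by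
  classical
  have hlen : l.length = n := by
    have := congrArg Multiset.card hl
    simpa using this
  have hmem : ∀ x ∈ l, x ≠ Fin.last n := by
    intro x hx hc
    have : x ∈ Multiset.map Fin.castSucc (Finset.univ.val : Multiset (Fin n)) := by
      rw [← hl]; exact hx
    rcases Multiset.mem_map.mp this with ⟨j, -, hj⟩
    exact (Fin.castSucc_lt_last j).ne (hj.trans hc)
  have hnd : l.Nodup := by
    have : (l : Multiset (Fin (n + 1))).Nodup := by
      rw [hl]
      exact Multiset.Nodup.map (Fin.castSucc_injective n) Finset.univ.nodup
    exact this
  have hget : ∀ i : Fin n, (i : ℕ) < l.length := fun i => by rw [hlen]; exact i.isLt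
  let f : Fin n → Fin n := fun i =>
    (l.get ⟨i, hget i⟩).castPred (hmem _ (List.get_mem l _))
  have hf : ∀ i, Fin.castSucc (f i) = l.get ⟨i, hget i⟩ := fun i =>
    Fin.castSucc_castPred _ _
  have finj : Function.Injective f := by
    intro i j hij
    have : l.get ⟨i, hget i⟩ = l.get ⟨j, hget j⟩ := by
      rw [← hf, ← hf, hij]
    have h2 := List.nodup_iff_injective_get.mp hnd this
    exact Fin.ext (congrArg (fun x : Fin l.length => (x : ℕ)) h2)
  let σ : Equiv.Perm (Fin n) := Equiv.ofBijective f ((Finite.injective_iff_bijective).mp finj)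
  refine ⟨σ, ?_⟩
  apply List.ext_get (by simp [hlen])
  intro i h1 h2
  rw [List.get_ofFn]
  show l.get _ = Fin.castSucc (f _)
  rw [hf]
  congr 1

theorem span_eq18 (n : ℕ) :
    Submodule.span ℚ (Set.range (leftNormed n)) = MultilinearPart (n + 1) := by
  apply le_antisymm
  · rw [Submodule.span_le]
    rintro v ⟨σ, rfl⟩
    exact Submodule.subset_span (isLieMon_leftNormed σ)
  · rw [MultilinearPart, Submodule.span_le]
    intro v hv
    have hcount : (Finset.univ.val : Multiset (Fin (n + 1))).count (Fin.last n) = 1 :=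
      Multiset.count_eq_one_of_mem Finset.univ.nodup (Finset.mem_univ_val _)
    have h1 := mem_LSpan18 hv hcount
    have herase : (Finset.univ.val : Multiset (Fin (n + 1))).erase (Fin.last n) =
        Multiset.map Fin.castSucc (Finset.univ.val : Multiset (Fin n)) := by
      rw [univ_val_succ, Multiset.erase_cons_head]
    rw [herase] at h1
    have hle : LSpan18 n (Multiset.map Fin.castSucc (Finset.univ.val : Multiset (Fin n))) ≤
        Submodule.span ℚ (Set.range (leftNormed n)) := by
      rw [LSpan18, Submodule.span_le]
      rintro w ⟨l, hls, rfl⟩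
      rcases exists_perm_of_list l hls with ⟨σ, rfl⟩
      exact Submodule.subset_span ⟨σ, rfl⟩
    exact hle h1

end More

end Aux18


/-- In the free Lie algebra over `ℚ` on `n+1` generators, the multilinear component of degree
`n+1` (the span of the Lie monomials in which each generator appears exactly once) has
dimension `n!`, with basis the left-normed brackets
`[x_{σ(0)}, [x_{σ(1)}, [⋯, [x_{σ(n-1)}, x_n]⋯]]]` for `σ` ranging over the permutations of the
first `n` generators. -/
theorem stmt18 (n : ℕ) :
    Module.finrank ℚ (MultilinearPart (n + 1)) = Nat.factorial n ∧
    ∃ b : Module.Basis (Equiv.Perm (Fin n)) ℚ (MultilinearPart (n + 1)),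
      ∀ σ : Equiv.Perm (Fin n),
        (b σ : FreeLieAlgebra ℚ (Fin (n + 1))) = leftNormed n σ := by
  classical
  have li := li18 n
  let b0 : Module.Basis (Equiv.Perm (Fin n)) ℚ
      (Submodule.span ℚ (Set.range (leftNormed n))) := Module.Basis.span li
  let e := LinearEquiv.ofEq _ _ (span_eq18 n)
  let b : Module.Basis (Equiv.Perm (Fin n)) ℚ (MultilinearPart (n + 1)) := b0.map e
  have hb : ∀ σ : Equiv.Perm (Fin n),
      (b σ : FreeLieAlgebra ℚ (Fin (n + 1))) = leftNormed n σ := by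
    intro σ
    have h1 : (b σ : FreeLieAlgebra ℚ (Fin (n + 1))) = (b0 σ : FreeLieAlgebra ℚ (Fin (n + 1))) := by
      simp [b, e, Module.Basis.map_apply]
    rw [h1, Module.Basis.span_apply]
  constructor
  · rw [Module.finrank_eq_card_basis b, Fintype.card_perm, Fintype.card_fin]
  · exact ⟨b, hb⟩
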